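/- Let C ⊆ R^n be a linear code over a finite chain ring R of rank K. If the maximum Hamming weight of C is w, then w ≥ K. -/

import Mathlib

open Submodule

-- every ideal of a finite chain ring is principal
lemma chain_principal (R : Type*) [CommRing R] [Fintype R]
    (hchain : ∀ I J : Ideal R, I ≤ J ∨ J ≤ I) (I : Ideal R) :
    ∃ a, I = Ideal.span {a} := by
  classical
  have key : ∀ s : Finset R, ∃ a : R, Ideal.span (s : Set R) = Ideal.span {a} := by
    intro s
    induction s using Finset.induction with
    | empty => exact ⟨0, by rw [Finset.coe_empty, Ideal.span_empty, Ideal.span_singleton_eq_bot.mpr rfl]⟩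
    | @insert a s ha ih =>
      obtain ⟨b, hb⟩ := ih
      rw [Finset.coe_insert, Ideal.span_insert, hb]
      rcases hchain (Ideal.span {a}) (Ideal.span {b}) with h | h
      · exact ⟨b, sup_eq_right.mpr h⟩
      · exact ⟨a, sup_eq_left.mpr h⟩
  obtain ⟨a, ha⟩ := key (Set.toFinset (I : Set R))
  exact ⟨a, by rw [← ha, Set.coe_toFinset, Ideal.span_eq]⟩

-- pull back a spanning finset through a map injective on C
lemma span_pullback {R M N : Type*} [CommRing R] [AddCommGroup M] [Module R M]
    [AddCommGroup N] [Module R N] (f : M →ₗ[R] N) (C : Submodule R M)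
    (hinj : ∀ x ∈ C, f x = 0 → x = 0) (T' : Finset N)
    (hT' : Submodule.span R (T' : Set N) = C.map f) :
    ∃ T : Finset M, T.card ≤ T'.card ∧ Submodule.span R (T : Set M) = C := by
  classical
  have hc : ∀ t ∈ T', ∃ x ∈ C, f x = t := by
    intro t ht
    have : t ∈ C.map f := hT' ▸ Submodule.subset_span ht
    simpa using this
  choose! c hcC hcf using hc
  have hsub : Submodule.span R ((T'.image c : Finset M) : Set M) ≤ C := by
    rw [Submodule.span_le]
    intro z hz
    simp only [Finset.coe_image, Set.mem_image, Finset.mem_coe] at hz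
    obtain ⟨t, ht, rfl⟩ := hz
    exact hcC t ht
  refine ⟨T'.image c, Finset.card_image_le, le_antisymm hsub ?_⟩
  intro x hx
  have hfx : f x ∈ Submodule.map f (Submodule.span R ((T'.image c : Finset M) : Set M)) := by
    rw [Submodule.map_span]
    refine Submodule.span_mono (s := (T' : Set N)) ?_ ?_
    · intro t ht
      exact ⟨c t, by simpa using ⟨t, ht, rfl⟩, hcf t ht⟩
    · rw [hT']
      exact Submodule.mem_map_of_mem hx
  obtain ⟨y, hy, hfy⟩ := hfx
  have hyC : y ∈ C := hsub hy
  have hxy : x - y = 0 := hinj _ (Submodule.sub_mem C hx hyC)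
    (by rw [map_sub, hfy, sub_self])
  have : x = y := by rw [← sub_eq_zero]; exact hxy
  rwa [this]

lemma subm_gen {R : Type*} [CommRing R]
    (hprin : ∀ I : Ideal R, ∃ a, I = Ideal.span {a}) :
    ∀ (m : ℕ) (M : Submodule R (Fin m → R)), ∃ T : Finset (Fin m → R),
      T.card ≤ m ∧ Submodule.span R (T : Set (Fin m → R)) = M := by
  intro m
  induction m with
  | zero =>
    intro M
    refine ⟨∅, le_refl 0, ?_⟩
    rw [Finset.coe_empty, Submodule.span_empty]
    apply le_antisymm bot_le
    intro x _
    have : x = 0 := Subsingleton.elim x 0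
    simp [this]
  | succ m ih =>
    intro M
    classical
    set π : (Fin (m + 1) → R) →ₗ[R] R := LinearMap.proj (Fin.last m) with hπ
    set ρ : (Fin (m + 1) → R) →ₗ[R] (Fin m → R) :=
      LinearMap.funLeft R R Fin.castSucc with hρ
    obtain ⟨a, ha⟩ := hprin (M.map π)
    have haI : a ∈ M.map π := by
      rw [ha]; exact Ideal.mem_span_singleton_self a
    obtain ⟨g, hgM, hga⟩ := haI
    set N : Submodule R (Fin (m + 1) → R) := M ⊓ LinearMap.ker π with hN
    obtain ⟨T', hT'c, hT's⟩ := ih (N.map ρ)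
    have hinj : ∀ x ∈ N, ρ x = 0 → x = 0 := by
      intro x hx hρx
      funext i
      induction i using Fin.lastCases with
      | last =>
        have := hx.2
        simpa [π, LinearMap.mem_ker] using this
      | cast j =>
        have := congrFun hρx j
        simpa [ρ, LinearMap.funLeft] using this
    obtain ⟨T₀, hT₀c, hT₀s⟩ := span_pullback ρ N hinj T' hT's
    refine ⟨insert g T₀, ?_, ?_⟩
    · calc (insert g T₀).card ≤ T₀.card + 1 := Finset.card_insert_le g T₀
        _ ≤ m + 1 := by omega
    · rw [Finset.coe_insert, Submodule.span_insert, hT₀s]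
      apply le_antisymm
      · apply sup_le
        · rw [Submodule.span_le, Set.singleton_subset_iff]; exact hgM
        · exact inf_le_left
      · intro x hx
        have hπx : π x ∈ M.map π := Submodule.mem_map_of_mem hx
        rw [ha, Ideal.mem_span_singleton'] at hπx
        obtain ⟨r, hr⟩ := hπx
        have hy : x - r • g ∈ N := by
          refine Submodule.mem_inf.mpr ⟨Submodule.sub_mem M hx (Submodule.smul_mem M r hgM), ?_⟩
          rw [LinearMap.mem_ker, map_sub, map_smul, hga]
          simp [smul_eq_mul, hr]
        have : x = r • g + (x - r • g) := by abel
        rw [this]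
        exact Submodule.add_mem _
          (Submodule.mem_sup_left (Submodule.smul_mem _ r (Submodule.mem_span_singleton_self g)))
          (Submodule.mem_sup_right hy)

theorem hamming_anticode_bound (R : Type*) [CommRing R] [Fintype R]
    [DecidableEq R] [IsLocalRing R]
    (hchain : ∀ I J : Ideal R, I ≤ J ∨ J ≤ I)
    (n : ℕ) (C : Submodule R (Fin n → R)) (K : ℕ)
    (hKgen : ∃ T : Finset (Fin n → R), T.card = K ∧
      Submodule.span R (T : Set (Fin n → R)) = C)
    (hKmin : ∀ T : Finset (Fin n → R),
      Submodule.span R (T : Set (Fin n → R)) = C → K ≤ T.card)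
    (w : ℕ)
    (hw : IsGreatest {m : ℕ | ∃ c ∈ C, m = hammingNorm c} w) :
    K ≤ w := by
  classical
  obtain ⟨c, hcC, hcw⟩ := hw.1
  have hcard : Fintype.card {i : Fin n // c i ≠ 0} = w := by
    rw [Fintype.card_subtype, hcw, hammingNorm]
  set e : Fin w ≃ {i : Fin n // c i ≠ 0} := (Fintype.equivFinOfCardEq hcard).symm with he
  set g : Fin w → Fin n := fun j => (e j : Fin n) with hg
  set f : (Fin n → R) →ₗ[R] (Fin w → R) := LinearMap.funLeft R R g with hf
  have hinj : ∀ x ∈ C, f x = 0 → x = 0 := by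
    intro x hxC hfx
    have hvan : ∀ i : Fin n, c i ≠ 0 → x i = 0 := by
      intro i hi
      have := congrFun hfx (e.symm ⟨i, hi⟩)
      simpa [f, LinearMap.funLeft, g] using this
    by_contra hx0
    obtain ⟨i0, hi0⟩ : ∃ i0, x i0 ≠ 0 := by
      by_contra h
      push_neg at h
      exact hx0 (funext h)
    have hci0 : c i0 = 0 := by
      by_contra h
      exact hi0 (hvan i0 h)
    have hsub : Finset.filter (fun i => c i ≠ 0) Finset.univ ⊂
        Finset.filter (fun i => (c + x) i ≠ 0) (Finset.univ : Finset (Fin n)) := by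
      constructor
      · intro i hi
        simp only [Finset.mem_filter, Finset.mem_univ, true_and] at hi ⊢
        rw [Pi.add_apply, hvan i hi, add_zero]
        exact hi
      · intro hcon
        have hi0mem : i0 ∈ Finset.filter (fun i => (c + x) i ≠ 0) (Finset.univ : Finset (Fin n)) := by
          simp only [Finset.mem_filter, Finset.mem_univ, true_and]
          rw [Pi.add_apply, hci0, zero_add]
          exact hi0
        have := hcon hi0mem
        simp only [Finset.mem_filter, Finset.mem_univ, true_and] at this
        exact this hci0
    have hlt : w < hammingNorm (c + x) := by
      rw [hcw, hammingNorm, hammingNorm]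
      exact Finset.card_lt_card hsub
    have hle : hammingNorm (c + x) ≤ w :=
      hw.2 ⟨c + x, Submodule.add_mem C hcC hxC, rfl⟩
    omega
  obtain ⟨T', hT'c, hT's⟩ := subm_gen (chain_principal R hchain) w (C.map f)
  obtain ⟨T, hTc, hTs⟩ := span_pullback f C hinj T' hT's
  calc K ≤ T.card := hKmin T hTs
    _ ≤ T'.card := hTc
    _ ≤ w := hT'c
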